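/- Let ρ be a d×d complex positive semidefinite matrix with trace 1, let 0 < α < 1, and let Φ_1, …, Φ_N (N ≥ 2) be quantum channels, where Φ_s has Kraus operators K^s_1, …, K^s_n (d×d complex matrices with ∑_{i=1}^n (K^s_i)† K^s_i = I). Then for all permutations π_1, …, π_N of {1, …, n} and each x ∈ {0, 1}: ∑_{s=1}^N I^α_ρ(Φ_s) ≥ (1/(2N − 2)) · [ ∑_{1 ≤ s < t ≤ N} ∑_{i=1}^n I^α_ρ(K^s_{π_s(i)} + (−1)^x K^t_{π_t(i)}) + (2/(N(N − 1))) · (∑_{1 ≤ s < t ≤ N} √(∑_{i=1}^n I^α_ρ(K^s_{π_s(i)} + (−1)^{x+1} K^t_{π_t(i)})))² ], where √ denotes the real square root. -/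

import Mathlib

set_option maxHeartbeats 1000000


open Matrix Finset
open scoped ComplexOrder

/-- `ρ^α` via the continuous functional calculus applied to `t ↦ t ^ α`. -/
noncomputable def mpow {d : ℕ} (ρ : Matrix (Fin d) (Fin d) ℂ) (α : ℝ) :
    Matrix (Fin d) (Fin d) ℂ :=
  cfc (fun t : ℝ => t ^ α) ρ

/-- The Wigner–Yanase–Dyson skew information
`I^α_ρ(K) = −(1/2) Tr([ρ^α, K†] [ρ^{1−α}, K])` of an arbitrary matrix `K`. -/
noncomputable def wyd {d : ℕ} (ρ : Matrix (Fin d) (Fin d) ℂ) (α : ℝ)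
    (K : Matrix (Fin d) (Fin d) ℂ) : ℝ :=
  (-(1 / 2 : ℂ) *
    ((mpow ρ α * Kᴴ - Kᴴ * mpow ρ α) * (mpow ρ (1 - α) * K - K * mpow ρ (1 - α))).trace).re

lemma mpow_eq {d : ℕ} {ρ : Matrix (Fin d) (Fin d) ℂ} (hρ : ρ.IsHermitian) (α : ℝ) :
    mpow ρ α = (hρ.eigenvectorUnitary : Matrix (Fin d) (Fin d) ℂ) *
      diagonal (fun i => ((hρ.eigenvalues i ^ α : ℝ) : ℂ)) *
      star (hρ.eigenvectorUnitary : Matrix (Fin d) (Fin d) ℂ) := by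
  rw [mpow, hρ.cfc_eq, Matrix.IsHermitian.cfc]
  rfl

lemma wyd_nonneg {d : ℕ} {ρ : Matrix (Fin d) (Fin d) ℂ} (hρ : ρ.PosSemidef)
    {α : ℝ} (hα0 : 0 ≤ α) (hα1 : α ≤ 1) (K : Matrix (Fin d) (Fin d) ℂ) :
    0 ≤ wyd ρ α K := by
  have hH := hρ.1
  set U : Matrix (Fin d) (Fin d) ℂ := (hH.eigenvectorUnitary : Matrix (Fin d) (Fin d) ℂ) with hUdef
  have hU1 : U * star U = 1 := Matrix.mem_unitaryGroup_iff.mp hH.eigenvectorUnitary.2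
  have hU2 : star U * U = 1 := Matrix.mem_unitaryGroup_iff'.mp hH.eigenvectorUnitary.2
  set p : Fin d → ℝ := fun i => hH.eigenvalues i ^ α with hp
  set q : Fin d → ℝ := fun i => hH.eigenvalues i ^ (1 - α) with hq
  set Dp : Matrix (Fin d) (Fin d) ℂ := diagonal (fun i => ((p i : ℝ) : ℂ)) with hDp
  set Dq : Matrix (Fin d) (Fin d) ℂ := diagonal (fun i => ((q i : ℝ) : ℂ)) with hDq
  set L : Matrix (Fin d) (Fin d) ℂ := star U * K * U with hL
  have hPa : mpow ρ α = U * Dp * star U := mpow_eq hH α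
  have hPb : mpow ρ (1 - α) = U * Dq * star U := mpow_eq hH (1 - α)
  have cmul : ∀ A B : Matrix (Fin d) (Fin d) ℂ,
      (U * A * star U) * (U * B * star U) = U * (A * B) * star U := by
    intro A B
    simp only [Matrix.mul_assoc]
    rw [← Matrix.mul_assoc (star U) U, hU2, Matrix.one_mul]
  have csub : ∀ A B : Matrix (Fin d) (Fin d) ℂ,
      U * A * star U - U * B * star U = U * (A - B) * star U := by
    intro A B
    simp only [Matrix.mul_sub, Matrix.sub_mul]
  have hK : U * L * star U = K := by
    simp only [hL, Matrix.mul_assoc, hU1, Matrix.mul_one]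
    rw [← Matrix.mul_assoc, hU1, Matrix.one_mul]
  have hKH : Kᴴ = U * Lᴴ * star U := by
    rw [← hK]
    simp [Matrix.conjTranspose_mul, Matrix.star_eq_conjTranspose, Matrix.mul_assoc]
  have key : (mpow ρ α * Kᴴ - Kᴴ * mpow ρ α) * (mpow ρ (1 - α) * K - K * mpow ρ (1 - α))
      = U * ((Dp * Lᴴ - Lᴴ * Dp) * (Dq * L - L * Dq)) * star U := by
    rw [hPa, hPb, hKH, ← hK, cmul Dp Lᴴ, cmul Lᴴ Dp, csub, cmul Dq L, cmul L Dq, csub, cmul]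
  have hTr : ((mpow ρ α * Kᴴ - Kᴴ * mpow ρ α) *
      (mpow ρ (1 - α) * K - K * mpow ρ (1 - α))).trace
      = ((Dp * Lᴴ - Lᴴ * Dp) * (Dq * L - L * Dq)).trace := by
    rw [key, Matrix.trace_mul_cycle, hU2, Matrix.one_mul]
  have e1 : Dp * Lᴴ - Lᴴ * Dp = Matrix.of (fun i j => (((p i : ℂ) - p j) * star (L j i))) := by
    ext i j
    simp only [hDp, Matrix.sub_apply, Matrix.diagonal_mul, Matrix.mul_diagonal,
      Matrix.conjTranspose_apply, Matrix.of_apply]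
    ring
  have e2 : Dq * L - L * Dq = Matrix.of (fun i j => (((q i : ℂ) - q j) * L i j)) := by
    ext i j
    simp only [hDq, Matrix.sub_apply, Matrix.diagonal_mul, Matrix.mul_diagonal, Matrix.of_apply]
    ring
  have hTrM : ((Dp * Lᴴ - Lᴴ * Dp) * (Dq * L - L * Dq)).trace
      = ∑ i, ∑ j, (((p i : ℂ) - p j) * star (L j i)) * (((q j : ℂ) - q i) * (L j i)) := by
    rw [e1, e2]
    simp only [Matrix.trace, Matrix.diag, Matrix.mul_apply, Matrix.of_apply]
  rw [wyd, hTr, hTrM]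
  rw [Finset.mul_sum]
  rw [Complex.re_sum]
  apply Finset.sum_nonneg
  intro i _
  rw [Finset.mul_sum, Complex.re_sum]
  apply Finset.sum_nonneg
  intro j _
  have hz : star (L j i) * (L j i) = ((Complex.normSq (L j i) : ℝ) : ℂ) := by
    rw [Complex.star_def, Complex.normSq_eq_conj_mul_self]
  have : -(1 / 2 : ℂ) * ((((p i : ℂ) - p j) * star (L j i)) * (((q j : ℂ) - q i) * (L j i)))
      = (((1 / 2 : ℝ) * ((p i - p j) * (q i - q j)) * Complex.normSq (L j i) : ℝ) : ℂ) := by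
    rw [show (((p i:ℂ) - p j) * star (L j i)) * (((q j:ℂ) - q i) * (L j i))
        = (((p i:ℂ) - p j)) * (((q j:ℂ) - q i)) * (star (L j i) * (L j i)) by ring, hz]
    push_cast
    ring
  rw [this, Complex.ofReal_re]
  have hmono : 0 ≤ (p i - p j) * (q i - q j) := by
    rcases le_total (hH.eigenvalues i) (hH.eigenvalues j) with h | h
    · have h1 : p i ≤ p j := Real.rpow_le_rpow (hρ.eigenvalues_nonneg i) h hα0
      have h2 : q i ≤ q j := Real.rpow_le_rpow (hρ.eigenvalues_nonneg i) h (by linarith)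
      nlinarith [mul_nonneg (by linarith : (0:ℝ) ≤ p j - p i) (by linarith : (0:ℝ) ≤ q j - q i)]
    · have h1 : p j ≤ p i := Real.rpow_le_rpow (hρ.eigenvalues_nonneg j) h hα0
      have h2 : q j ≤ q i := Real.rpow_le_rpow (hρ.eigenvalues_nonneg j) h (by linarith)
      exact mul_nonneg (by linarith) (by linarith)
  exact mul_nonneg (mul_nonneg (by norm_num) hmono) (Complex.normSq_nonneg _)

lemma wyd_parallelogram {d : ℕ} (ρ : Matrix (Fin d) (Fin d) ℂ) (α : ℝ)
    (A B : Matrix (Fin d) (Fin d) ℂ) :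
    wyd ρ α (A + B) + wyd ρ α (A - B) = 2 * wyd ρ α A + 2 * wyd ρ α B := by
  have key : (mpow ρ α * (A + B)ᴴ - (A + B)ᴴ * mpow ρ α) *
        (mpow ρ (1 - α) * (A + B) - (A + B) * mpow ρ (1 - α))
      + (mpow ρ α * (A - B)ᴴ - (A - B)ᴴ * mpow ρ α) *
        (mpow ρ (1 - α) * (A - B) - (A - B) * mpow ρ (1 - α))
      = ((mpow ρ α * Aᴴ - Aᴴ * mpow ρ α) * (mpow ρ (1 - α) * A - A * mpow ρ (1 - α))
        + (mpow ρ α * Aᴴ - Aᴴ * mpow ρ α) * (mpow ρ (1 - α) * A - A * mpow ρ (1 - α)))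
      + ((mpow ρ α * Bᴴ - Bᴴ * mpow ρ α) * (mpow ρ (1 - α) * B - B * mpow ρ (1 - α))
        + (mpow ρ α * Bᴴ - Bᴴ * mpow ρ α) * (mpow ρ (1 - α) * B - B * mpow ρ (1 - α))) := by
    simp only [Matrix.conjTranspose_add, Matrix.conjTranspose_sub]
    noncomm_ring
  have htr := congrArg Matrix.trace key
  simp only [Matrix.trace_add] at htr
  unfold wyd
  have hre : ∀ z w : ℂ, (-(1/2:ℂ) * z).re + (-(1/2:ℂ) * w).re = (-(1/2:ℂ) * (z + w)).re := by
    intro z w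
    rw [mul_add, Complex.add_re]
  rw [hre, htr]
  set tA := ((mpow ρ α * Aᴴ - Aᴴ * mpow ρ α) * (mpow ρ (1 - α) * A - A * mpow ρ (1 - α))).trace
  set tB := ((mpow ρ α * Bᴴ - Bᴴ * mpow ρ α) * (mpow ρ (1 - α) * B - B * mpow ρ (1 - α))).trace
  have : -(1/2:ℂ) * (tA + tA + (tB + tB)) = (2:ℝ) * (-(1/2:ℂ) * tA) + (2:ℝ) * (-(1/2:ℂ) * tB) := by
    push_cast; ring
  rw [this, Complex.add_re, Complex.re_ofReal_mul, Complex.re_ofReal_mul]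

lemma pair_sum {N : ℕ} (I : Fin N → ℝ) :
    ∑ p ∈ univ.filter (fun p : Fin N × Fin N => p.1 < p.2), (I p.1 + I p.2)
      = ((N : ℝ) - 1) * ∑ s, I s := by
  rw [Finset.sum_add_distrib]
  have h1 : ∑ p ∈ univ.filter (fun p : Fin N × Fin N => p.1 < p.2), I p.2
      = ∑ p ∈ univ.filter (fun p : Fin N × Fin N => p.2 < p.1), I p.1 := by
    apply Finset.sum_equiv (Equiv.prodComm (Fin N) (Fin N))
    · intro p; simp
    · intro p _; rfl
  rw [h1]
  have hdisj : Disjoint (univ.filter (fun p : Fin N × Fin N => p.1 < p.2))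
      (univ.filter (fun p : Fin N × Fin N => p.2 < p.1)) := by
    rw [Finset.disjoint_left]
    intro p hp hq
    simp only [Finset.mem_filter] at hp hq
    exact absurd hq.2 (not_lt.mpr hp.2.le)
  have hun : (univ.filter (fun p : Fin N × Fin N => p.1 < p.2)) ∪
      (univ.filter (fun p : Fin N × Fin N => p.2 < p.1))
      = univ.filter (fun p : Fin N × Fin N => p.1 ≠ p.2) := by
    ext p
    simp only [Finset.mem_union, Finset.mem_filter, Finset.mem_univ, true_and]
    constructor
    · rintro (h | h)
      · exact ne_of_lt h
      · exact (ne_of_lt h).symm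
    · intro h
      exact lt_or_gt_of_ne h
  have hsplit : ∑ p ∈ univ.filter (fun p : Fin N × Fin N => p.1 < p.2), I p.1
      + ∑ p ∈ univ.filter (fun p : Fin N × Fin N => p.2 < p.1), I p.1
      = ∑ p ∈ univ.filter (fun p : Fin N × Fin N => p.1 ≠ p.2), I p.1 := by
    rw [← hun, Finset.sum_union hdisj]
  rw [hsplit]
  have hall := Finset.sum_filter_add_sum_filter_not (univ : Finset (Fin N × Fin N))
    (fun p => p.1 ≠ p.2) (fun p => I p.1)
  have hA : ∑ p : Fin N × Fin N, I p.1 = (N : ℝ) * ∑ s, I s := by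
    rw [Fintype.sum_prod_type, Finset.mul_sum]
    simp [Finset.sum_const, Finset.card_univ, mul_comm]
  have hB : ∑ p ∈ univ.filter (fun p : Fin N × Fin N => ¬ p.1 ≠ p.2), I p.1 = ∑ s, I s := by
    rw [Finset.sum_filter, Fintype.sum_prod_type]
    simp
  rw [hB, hA] at hall
  have : ∑ p ∈ univ.filter (fun p : Fin N × Fin N => p.1 ≠ p.2), I p.1
      = (N : ℝ) * ∑ s, I s - ∑ s, I s := by linarith
  rw [this]
  ring

theorem channel_uncertainty_LB3 (d n N : ℕ) (hN : 2 ≤ N)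
    (ρ : Matrix (Fin d) (Fin d) ℂ) (hρ : ρ.PosSemidef) (hTr : ρ.trace = 1)
    (α : ℝ) (hα0 : 0 < α) (hα1 : α < 1)
    (K : Fin N → Fin n → Matrix (Fin d) (Fin d) ℂ)
    (hK : ∀ s, ∑ i, (K s i)ᴴ * K s i = 1)
    (π : Fin N → Equiv.Perm (Fin n)) :
    ∀ x ∈ ({0, 1} : Set ℕ),
      ∑ s, ∑ i, wyd ρ α (K s i) ≥
        (1 / (2 * (N : ℝ) - 2)) *
          ((∑ p ∈ univ.filter (fun p : Fin N × Fin N => p.1 < p.2),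
              ∑ i, wyd ρ α (K p.1 (π p.1 i) + ((-1 : ℂ) ^ x) • K p.2 (π p.2 i))) +
            (2 / ((N : ℝ) * ((N : ℝ) - 1))) *
              (∑ p ∈ univ.filter (fun p : Fin N × Fin N => p.1 < p.2),
                Real.sqrt
                  (∑ i, wyd ρ α (K p.1 (π p.1 i) + ((-1 : ℂ) ^ (x + 1)) • K p.2 (π p.2 i)))) ^ 2) := by
  have hJperm : ∀ s, ∑ i, wyd ρ α (K s (π s i)) = ∑ i, wyd ρ α (K s i) :=
    fun s => Equiv.sum_comp (π s) (fun i => wyd ρ α (K s i))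
  have hN2 : (2 : ℝ) ≤ (N : ℝ) := by exact_mod_cast hN
  have key : ∀ (M₁ M₂ : Fin N × Fin N → Fin n → Matrix (Fin d) (Fin d) ℂ),
      (∀ p i, wyd ρ α (M₁ p i) + wyd ρ α (M₂ p i)
        = 2 * wyd ρ α (K p.1 (π p.1 i)) + 2 * wyd ρ α (K p.2 (π p.2 i))) →
      (∀ p i, 0 ≤ wyd ρ α (M₂ p i)) →
      ∑ s, ∑ i, wyd ρ α (K s i) ≥ (1 / (2 * (N : ℝ) - 2)) *
        ((∑ p ∈ univ.filter (fun p : Fin N × Fin N => p.1 < p.2), ∑ i, wyd ρ α (M₁ p i))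
          + (2 / ((N : ℝ) * ((N : ℝ) - 1))) *
            (∑ p ∈ univ.filter (fun p : Fin N × Fin N => p.1 < p.2),
              Real.sqrt (∑ i, wyd ρ α (M₂ p i))) ^ 2) := by
    intro M₁ M₂ h12 hpos
    set S := univ.filter (fun p : Fin N × Fin N => p.1 < p.2) with hS
    set Stot := ∑ s, ∑ i, wyd ρ α (K s i) with hStot
    have hsum : (∑ p ∈ S, ∑ i, wyd ρ α (M₁ p i)) + (∑ p ∈ S, ∑ i, wyd ρ α (M₂ p i))
        = (2 * (N : ℝ) - 2) * Stot := by
      rw [← Finset.sum_add_distrib]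
      have step : ∀ p ∈ S, (∑ i, wyd ρ α (M₁ p i)) + (∑ i, wyd ρ α (M₂ p i))
          = 2 * ((∑ i, wyd ρ α (K p.1 i)) + (∑ i, wyd ρ α (K p.2 i))) := by
        intro p _
        rw [← Finset.sum_add_distrib]
        rw [Finset.sum_congr rfl (fun i _ => h12 p i)]
        rw [Finset.sum_add_distrib, ← Finset.mul_sum, ← Finset.mul_sum, hJperm, hJperm]
        ring
      rw [Finset.sum_congr rfl step, ← Finset.mul_sum]
      rw [pair_sum (fun s => ∑ i, wyd ρ α (K s i))]
      ring
    have hcard : ((S.card : ℝ)) * 2 = ((N : ℝ) - 1) * N := by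
      have h := pair_sum (fun _ : Fin N => (1 : ℝ))
      simp only [Finset.sum_const, Finset.card_univ, Fintype.card_fin, nsmul_eq_mul,
        mul_one] at h
      rw [← hS] at h
      linarith [h]
    have hAm : 0 ≤ ∑ p ∈ S, ∑ i, wyd ρ α (M₂ p i) :=
      Finset.sum_nonneg (fun p _ => Finset.sum_nonneg (fun i _ => hpos p i))
    have hCS : (∑ p ∈ S, Real.sqrt (∑ i, wyd ρ α (M₂ p i))) ^ 2
        ≤ (S.card : ℝ) * ∑ p ∈ S, ∑ i, wyd ρ α (M₂ p i) := by
      have h := sq_sum_le_card_mul_sum_sq (s := S)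
        (f := fun p => Real.sqrt (∑ i, wyd ρ α (M₂ p i)))
      calc (∑ p ∈ S, Real.sqrt (∑ i, wyd ρ α (M₂ p i))) ^ 2
          ≤ (S.card : ℝ) * ∑ p ∈ S, (Real.sqrt (∑ i, wyd ρ α (M₂ p i))) ^ 2 := h
        _ = (S.card : ℝ) * ∑ p ∈ S, ∑ i, wyd ρ α (M₂ p i) := by
            congr 1
            exact Finset.sum_congr rfl (fun p _ =>
              Real.sq_sqrt (Finset.sum_nonneg (fun i _ => hpos p i)))
    have hNN : (0 : ℝ) < (N : ℝ) * ((N : ℝ) - 1) := by nlinarith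
    have hfrac : (2 / ((N : ℝ) * ((N : ℝ) - 1))) *
        (∑ p ∈ S, Real.sqrt (∑ i, wyd ρ α (M₂ p i))) ^ 2
        ≤ ∑ p ∈ S, ∑ i, wyd ρ α (M₂ p i) := by
      rw [div_mul_eq_mul_div, div_le_iff₀ hNN]
      nlinarith [hCS, hAm, hcard]
    have hbr : (∑ p ∈ S, ∑ i, wyd ρ α (M₁ p i)) + (2 / ((N : ℝ) * ((N : ℝ) - 1))) *
        (∑ p ∈ S, Real.sqrt (∑ i, wyd ρ α (M₂ p i))) ^ 2 ≤ (2 * (N : ℝ) - 2) * Stot := by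
      linarith
    have h2N : (0 : ℝ) < 2 * (N : ℝ) - 2 := by linarith
    calc (1 / (2 * (N : ℝ) - 2)) *
          ((∑ p ∈ S, ∑ i, wyd ρ α (M₁ p i)) + (2 / ((N : ℝ) * ((N : ℝ) - 1))) *
            (∑ p ∈ S, Real.sqrt (∑ i, wyd ρ α (M₂ p i))) ^ 2)
        ≤ (1 / (2 * (N : ℝ) - 2)) * ((2 * (N : ℝ) - 2) * Stot) := by
          apply mul_le_mul_of_nonneg_left hbr
          positivity
      _ = Stot := by field_simp [show (N : ℝ) - 1 ≠ 0 by linarith]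
  intro x hx
  simp only [Set.mem_insert_iff, Set.mem_singleton_iff] at hx
  rcases hx with rfl | rfl
  · simp only [pow_zero, one_smul, zero_add, pow_one, neg_one_smul, ← sub_eq_add_neg]
    exact key (fun p i => K p.1 (π p.1 i) + K p.2 (π p.2 i))
      (fun p i => K p.1 (π p.1 i) - K p.2 (π p.2 i))
      (fun p i => wyd_parallelogram ρ α _ _)
      (fun p i => wyd_nonneg hρ hα0.le hα1.le _)
  · have h2 : ((-1 : ℂ)) ^ (1 + 1) = 1 := by norm_num
    simp only [pow_one, neg_one_smul, ← sub_eq_add_neg, h2, one_smul]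
    exact key (fun p i => K p.1 (π p.1 i) - K p.2 (π p.2 i))
      (fun p i => K p.1 (π p.1 i) + K p.2 (π p.2 i))
      (fun p i => by rw [add_comm]; exact wyd_parallelogram ρ α _ _)
      (fun p i => wyd_nonneg hρ hα0.le hα1.le _)
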